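/- Let d ≥ 2 be an integer, c ∈ ℂ, φ(z) = z^d + c, and let α ∈ ℂ satisfy log|α| > (1/d)·max(log|c|, 0) + log 2. Then there exists a real number L such that log|φ^[k](α)| / d^k tends to L as k → ∞, and this L satisfies log(1 − 2^{−d})/(d − 1) ≤ L − log|α| ≤ log(1 + 2^{−d})/(d − 1). -/

import Mathlib

open Filter

lemma key_step (d : ℕ) (hd : 2 ≤ d) (c z : ℂ)
    (hz : Real.log (‖z‖) >
      (1 / d) * max (Real.log (‖c‖)) 0 + Real.log 2) :
    (Real.log (‖z ^ d + c‖) >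
      (1 / d) * max (Real.log (‖c‖)) 0 + Real.log 2) ∧
    d * Real.log (‖z‖) + Real.log (1 - (2:ℝ)⁻¹ ^ d)
      ≤ Real.log (‖z ^ d + c‖) ∧
    Real.log (‖z ^ d + c‖)
      ≤ d * Real.log (‖z‖) + Real.log (1 + (2:ℝ)⁻¹ ^ d) := by
  have hd2 : (2:ℝ) ≤ (d:ℝ) := by exact_mod_cast hd
  have hdpos : (0:ℝ) < d := by linarith
  set M := max (Real.log (‖c‖)) 0 with hMdef
  have hM0 : 0 ≤ M := le_max_right _ _
  have hlog2 : 0 < Real.log 2 := Real.log_pos (by norm_num)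
  have hz1 : 1 < ‖z‖ := by
    by_contra h
    push_neg at h
    have : Real.log (‖z‖) ≤ 0 := Real.log_nonpos (norm_nonneg z) h
    have : (0:ℝ) < (1/d) * M + Real.log 2 := by positivity
    linarith
  have hzpos : (0:ℝ) < ‖z‖ := lt_trans one_pos hz1
  -- small powers facts
  have hq : (0:ℝ) < (2:ℝ)⁻¹ ^ d := by positivity
  have hqle : (2:ℝ)⁻¹ ^ d ≤ (1:ℝ)/4 := by
    calc (2:ℝ)⁻¹ ^ d ≤ (2:ℝ)⁻¹ ^ 2 := by
          apply pow_le_pow_of_le_one (by norm_num) (by norm_num) hd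
      _ = 1/4 := by norm_num
  have h1q : (0:ℝ) < 1 - (2:ℝ)⁻¹ ^ d := by linarith
  -- |c| < 2⁻¹^d * |z|^d
  have hzd : Real.exp ((d:ℝ) * Real.log (‖z‖)) = ‖z‖ ^ d := by
    rw [Real.exp_nat_mul, Real.exp_log hzpos]
  have hdM : M + (d:ℝ) * Real.log 2 < (d:ℝ) * Real.log (‖z‖) := by
    have := mul_lt_mul_of_pos_left hz (show (0:ℝ) < d from hdpos)
    have h1 : (d:ℝ) * ((1/d) * M) = M := by field_simp
    nlinarith [this]
  have hc : ‖c‖ < (2:ℝ)⁻¹ ^ d * ‖z‖ ^ d := by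
    have hcM : ‖c‖ ≤ Real.exp M := by
      rcases eq_or_lt_of_le (norm_nonneg c) with h | h
      · have := Real.exp_pos M; linarith
      · calc ‖c‖ = Real.exp (Real.log (‖c‖)) := (Real.exp_log h).symm
          _ ≤ Real.exp M := Real.exp_le_exp.mpr (le_max_left _ _)
    have h2 : Real.exp (M + (d:ℝ) * Real.log 2) < Real.exp ((d:ℝ) * Real.log (‖z‖)) :=
      Real.exp_lt_exp.mpr hdM
    rw [Real.exp_add, Real.exp_nat_mul, Real.exp_log (by norm_num : (0:ℝ) < 2), hzd] at h2
    have h2d : (2:ℝ)⁻¹ ^ d * (2:ℝ) ^ d = 1 := by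
      rw [← mul_pow]; norm_num
    nlinarith [Real.exp_pos M, pow_pos (show (0:ℝ) < 2 by norm_num) d]
  -- abs bounds
  have hmap : ‖z ^ d‖ = ‖z‖ ^ d := norm_pow _ _
  have habs_low : (1 - (2:ℝ)⁻¹ ^ d) * ‖z‖ ^ d ≤ ‖z ^ d + c‖ := by
    have h1 := norm_add_le (z ^ d + c) (-c)
    simp only [add_neg_cancel_right, map_neg, norm_neg] at h1
    rw [hmap] at h1
    nlinarith [pow_pos hzpos d]
  have habs_hi : ‖z ^ d + c‖ ≤ (1 + (2:ℝ)⁻¹ ^ d) * ‖z‖ ^ d := by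
    have h1 := norm_add_le (z ^ d) c
    rw [hmap] at h1
    nlinarith [pow_pos hzpos d]
  have hlow : (d:ℝ) * Real.log (‖z‖) + Real.log (1 - (2:ℝ)⁻¹ ^ d)
      ≤ Real.log (‖z ^ d + c‖) := by
    have := Real.log_le_log (by positivity) habs_low
    rwa [Real.log_mul (ne_of_gt h1q) (by positivity), Real.log_pow, add_comm] at this
  have hhi : Real.log (‖z ^ d + c‖)
      ≤ (d:ℝ) * Real.log (‖z‖) + Real.log (1 + (2:ℝ)⁻¹ ^ d) := by
    have hpos : (0:ℝ) < ‖z ^ d + c‖ := lt_of_lt_of_le (by positivity) habs_low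
    have := Real.log_le_log hpos habs_hi
    rw [Real.log_mul (by positivity) (by positivity), Real.log_pow] at this
    linarith
  refine ⟨?_, hlow, hhi⟩
  -- invariant
  have hA : Real.log ((2:ℝ)⁻¹ ^ (d-1)) ≤ Real.log (1 - (2:ℝ)⁻¹ ^ d) := by
    apply Real.log_le_log (by positivity)
    have : (2:ℝ)⁻¹ ^ (d-1) ≤ (2:ℝ)⁻¹ ^ 1 := by
      apply pow_le_pow_of_le_one (by norm_num) (by norm_num) (by omega)
    norm_num at this ⊢
    linarith
  have hA2 : Real.log ((2:ℝ)⁻¹ ^ (d-1)) = -(((d:ℝ) - 1) * Real.log 2) := by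
    rw [Real.log_pow, Real.log_inv]
    have : ((d - 1 : ℕ) : ℝ) = (d:ℝ) - 1 := by
      have : 1 ≤ d := by omega
      push_cast [this]; ring
    rw [this]; ring
  have hMle : (1/(d:ℝ)) * M ≤ M := by
    have h1 : (1/(d:ℝ)) ≤ 1 := by
      rw [div_le_one hdpos]; linarith
    nlinarith
  calc (1 / (d:ℝ)) * M + Real.log 2
      ≤ M + ((d:ℝ)) * Real.log 2 - (((d:ℝ)-1) * Real.log 2) := by nlinarith
    _ < (d:ℝ) * Real.log (‖z‖) - (((d:ℝ)-1) * Real.log 2) := by linarith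
    _ ≤ (d:ℝ) * Real.log (‖z‖) + Real.log (1 - (2:ℝ)⁻¹ ^ d) := by
        have h := hA; rw [hA2] at h; linarith
    _ ≤ Real.log (‖z ^ d + c‖) := hlow

theorem local_canonical_height_exists_on_B (d : ℕ) (hd : 2 ≤ d) (c α : ℂ)
    (hα : Real.log (‖α‖) >
      (1 / d) * max (Real.log (‖c‖)) 0 + Real.log 2) :
    ∃ L : ℝ,
      Tendsto (fun k : ℕ =>
          Real.log (‖(fun z : ℂ => z ^ d + c)^[k] α‖) / (d : ℝ) ^ k)
        atTop (nhds L) ∧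
      Real.log (1 - (2 : ℝ)⁻¹ ^ d) / (d - 1) ≤ L - Real.log (‖α‖) ∧
      L - Real.log (‖α‖) ≤ Real.log (1 + (2 : ℝ)⁻¹ ^ d) / (d - 1) := by
  have hd2 : (2:ℝ) ≤ (d:ℝ) := by exact_mod_cast hd
  have hdpos : (0:ℝ) < d := by linarith
  set φ : ℂ → ℂ := fun z => z ^ d + c with hφ
  set f : ℕ → ℝ := fun k => Real.log (‖φ^[k] α‖) / (d:ℝ) ^ k with hf
  have hinv : ∀ k, Real.log (‖φ^[k] α‖) >
      (1/d) * max (Real.log (‖c‖)) 0 + Real.log 2 := by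
    intro k
    induction k with
    | zero => simpa using hα
    | succ k ih =>
      rw [Function.iterate_succ_apply']
      exact (key_step d hd c _ ih).1
  set A := Real.log (1 - (2:ℝ)⁻¹ ^ d) with hA
  set B := Real.log (1 + (2:ℝ)⁻¹ ^ d) with hB
  set r : ℝ := (d:ℝ)⁻¹ with hr
  have hr0 : (0:ℝ) ≤ r := by positivity
  have hr1 : r < 1 := by
    rw [hr, inv_lt_one_iff₀]; right; linarith
  set g : ℕ → ℝ := fun k => f (k+1) - f k with hg
  have hgbound : ∀ k, A * r^(k+1) ≤ g k ∧ g k ≤ B * r^(k+1) := by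
    intro k
    obtain ⟨_, hlo, hhi⟩ := key_step d hd c (φ^[k] α) (hinv k)
    have hiter : φ^[k+1] α = (φ^[k] α) ^ d + c := Function.iterate_succ_apply' φ k α
    have hdk : (0:ℝ) < (d:ℝ)^(k+1) := by positivity
    have heqA : ((d:ℝ) * Real.log (‖φ^[k] α‖) + A) / (d:ℝ)^(k+1)
        = A * r^(k+1) + f k := by
      simp only [hf, hr, inv_pow]
      rw [pow_succ]
      field_simp
      ring
    have heqB : ((d:ℝ) * Real.log (‖φ^[k] α‖) + B) / (d:ℝ)^(k+1)
        = B * r^(k+1) + f k := by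
      simp only [hf, hr, inv_pow]
      rw [pow_succ]
      field_simp
      ring
    have hfk1 : f (k+1) = Real.log (‖(φ^[k] α) ^ d + c‖) / (d:ℝ)^(k+1) := by
      simp only [hf, hiter]
    constructor
    · have h := (div_le_div_iff_of_pos_right hdk).mpr hlo
      rw [heqA, ← hfk1] at h
      simp only [hg]; linarith
    · have h := (div_le_div_iff_of_pos_right hdk).mpr hhi
      rw [heqB, ← hfk1] at h
      simp only [hg]; linarith
  have hgeo := summable_geometric_of_lt_one hr0 hr1
  have hsA : Summable (fun k : ℕ => A * r^(k+1)) :=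
    (hgeo.mul_left (A*r)).congr (fun k => by rw [pow_succ]; ring)
  have hsB : Summable (fun k : ℕ => B * r^(k+1)) :=
    (hgeo.mul_left (B*r)).congr (fun k => by rw [pow_succ]; ring)
  have hs0 : Summable (fun k => g k - A * r^(k+1)) :=
    Summable.of_nonneg_of_le (fun k => sub_nonneg.mpr (hgbound k).1)
      (fun k => sub_le_sub_right (hgbound k).2 _) (hsB.sub hsA)
  have hsg : Summable g := by
    have := hs0.add hsA
    simpa using this
  have hrd : r * (1 - r)⁻¹ = ((d:ℝ) - 1)⁻¹ := by
    rw [hr, ← mul_inv]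
    congr 1
    field_simp
  have htA : ∑' k : ℕ, A * r^(k+1) = A / ((d:ℝ) - 1) := by
    calc ∑' k : ℕ, A * r^(k+1) = ∑' k : ℕ, (A*r) * r^k :=
          tsum_congr fun k => by rw [pow_succ]; ring
      _ = (A*r) * (1-r)⁻¹ := by rw [tsum_mul_left, tsum_geometric_of_lt_one hr0 hr1]
      _ = A / ((d:ℝ) - 1) := by rw [mul_assoc, hrd, div_eq_mul_inv]
  have htB : ∑' k : ℕ, B * r^(k+1) = B / ((d:ℝ) - 1) := by
    calc ∑' k : ℕ, B * r^(k+1) = ∑' k : ℕ, (B*r) * r^k :=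
          tsum_congr fun k => by rw [pow_succ]; ring
      _ = (B*r) * (1-r)⁻¹ := by rw [tsum_mul_left, tsum_geometric_of_lt_one hr0 hr1]
      _ = B / ((d:ℝ) - 1) := by rw [mul_assoc, hrd, div_eq_mul_inv]
  have hf0 : f 0 = Real.log (‖α‖) := by simp [hf]
  refine ⟨Real.log (‖α‖) + ∑' k, g k, ?_, ?_, ?_⟩
  · have h1 := hsg.hasSum.tendsto_sum_nat
    have h2 : Tendsto (fun k => Real.log (‖α‖) + ∑ i ∈ Finset.range k, g i)
        atTop (nhds (Real.log (‖α‖) + ∑' k, g k)) := tendsto_const_nhds.add h1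
    refine h2.congr fun k => ?_
    have := Finset.sum_range_sub f k
    simp only [hg]
    rw [this, hf0]
    simp only [hf]
    ring
  · have h := Summable.tsum_le_tsum (fun k => (hgbound k).1) hsA hsg
    rw [htA] at h
    linarith
  · have h := Summable.tsum_le_tsum (fun k => (hgbound k).2) hsg hsB
    rw [htB] at h
    linarith
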